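/- Let A, B be independent random variables with H(A) = H(B) = F, and let X, Y, X', Y' be random variables such that (X, X') determines A, (Y, Y') determines A, and (X, Y) determines B. Then H(X) + H(X') + H(Y) + H(Y') ≥ 3F. -/

import Mathlib

open Finset Real

namespace GDSP

variable {Ω : Type} [Fintype Ω]

/-- Probability that the random variable `X` takes the value `x`, under weights `p`. -/
noncomputable def pr {α : Type} [DecidableEq α] (p : Ω → ℝ) (X : Ω → α) (x : α) : ℝ :=
  ∑ ω, if X ω = x then p ω else 0

/-- Shannon entropy of `X`, to base `q` (convention `0 · log 0 = 0`). -/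
noncomputable def ent {α : Type} [Fintype α] [DecidableEq α] (q : ℝ) (p : Ω → ℝ)
    (X : Ω → α) : ℝ :=
  -∑ x, pr p X x * Real.logb q (pr p X x)

/-- Conditional entropy `H(X | Y) = H(X, Y) - H(Y)`. -/
noncomputable def condEnt {α β : Type} [Fintype α] [DecidableEq α] [Fintype β] [DecidableEq β]
    (q : ℝ) (p : Ω → ℝ) (X : Ω → α) (Y : Ω → β) : ℝ :=
  ent q p (fun ω => (X ω, Y ω)) - ent q p Y

/-- Mutual information `I(X; Y) = H(X) - H(X | Y)`. -/
noncomputable def mutInf {α β : Type} [Fintype α] [DecidableEq α] [Fintype β] [DecidableEq β]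
    (q : ℝ) (p : Ω → ℝ) (X : Ω → α) (Y : Ω → β) : ℝ :=
  ent q p X - condEnt q p X Y

/-- The weights conditioned on the event `A = a`. -/
noncomputable def condp {α : Type} [DecidableEq α] (p : Ω → ℝ) (A : Ω → α) (a : α) : Ω → ℝ :=
  fun ω => (if A ω = a then p ω else 0) / pr p A a

/-- `p` is a probability assignment on the finite sample space `Ω`. -/
def IsProb (p : Ω → ℝ) : Prop := (∀ ω, 0 ≤ p ω) ∧ ∑ ω, p ω = 1

/-- `A` is uniformly distributed on its (finite) alphabet. -/
def Uniform {α : Type} [Fintype α] [DecidableEq α] (p : Ω → ℝ) (A : Ω → α) : Prop :=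
  ∀ a, pr p A a = (Fintype.card α : ℝ)⁻¹

/-- `X` and `Y` are independent. -/
def Indep {α β : Type} [DecidableEq α] [DecidableEq β] (p : Ω → ℝ) (X : Ω → α)
    (Y : Ω → β) : Prop :=
  ∀ x y, pr p (fun ω => (X ω, Y ω)) (x, y) = pr p X x * pr p Y y

/-- The uniform probability assignment on a finite type. -/
noncomputable def punif (α : Type) [Fintype α] : α → ℝ := fun _ => (Fintype.card α : ℝ)⁻¹

end GDSP

namespace GDSP
section Aux
variable {Ω : Type} [Fintype Ω] {q : ℝ} {p : Ω → ℝ} {α γ γ' : Type}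

lemma pr_nonneg [DecidableEq α] (hp0 : ∀ ω, 0 ≤ p ω) (Z : Ω → α) (z : α) :
    0 ≤ pr p Z z := by
  refine Finset.sum_nonneg fun ω _ => ?_
  split
  · exact hp0 ω
  · exact le_rfl

lemma sum_pr [Fintype α] [DecidableEq α] (Z : Ω → α) :
    ∑ z, pr p Z z = ∑ ω, p ω := by
  unfold pr
  rw [Finset.sum_comm]
  simp [Finset.sum_ite_eq]

lemma le_pr [DecidableEq α] (hp0 : ∀ ω, 0 ≤ p ω) (Z : Ω → α) (ω : Ω) :
    p ω ≤ pr p Z (Z ω) := by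
  have := Finset.single_le_sum (f := fun ω' => if Z ω' = Z ω then p ω' else 0)
    (fun i _ => by split; exacts [hp0 i, le_rfl]) (Finset.mem_univ ω)
  simpa [pr] using this

lemma pr_comp_le [DecidableEq α] [DecidableEq γ'] (hp0 : ∀ ω, 0 ≤ p ω) (Z : Ω → α)
    (f : α → γ') (z : α) : pr p Z z ≤ pr p (fun ω => f (Z ω)) (f z) := by
  refine Finset.sum_le_sum fun ω _ => ?_
  dsimp only
  by_cases h : Z ω = z
  · simp [h]
  · simp only [h, if_false]
    split; exacts [hp0 ω, le_rfl]

lemma sum_pr_mul [Fintype α] [DecidableEq α] (Z : Ω → α) (g : α → ℝ) :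
    ∑ z, pr p Z z * g z = ∑ ω, p ω * g (Z ω) := by
  unfold pr
  simp only [Finset.sum_mul, ite_mul, zero_mul]
  rw [Finset.sum_comm]
  congr 1; ext ω
  rw [Finset.sum_ite_eq Finset.univ (Z ω) (fun z => p ω * g z)]
  simp

lemma ent_omega [Fintype α] [DecidableEq α] (Z : Ω → α) :
    ent q p Z = -∑ ω, p ω * logb q (pr p Z (Z ω)) := by
  rw [ent, sum_pr_mul]

lemma gibbs (hq : 1 < q) [Fintype γ] (r s : γ → ℝ)
    (hr : ∀ i, 0 ≤ r i) (hs : ∀ i, 0 ≤ s i) (hrs : ∀ i, s i = 0 → r i = 0)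
    (hs1 : ∑ i, s i ≤ ∑ i, r i) :
    -∑ i, r i * logb q (r i) ≤ -∑ i, r i * logb q (s i) := by
  have hlq : 0 < Real.log q := Real.log_pos hq
  rw [neg_le_neg_iff]
  have key : ∀ i, r i * logb q (s i) - r i * logb q (r i) ≤ (s i - r i) / Real.log q := by
    intro i
    rcases eq_or_lt_of_le (hr i) with h0 | h0
    · rw [← h0]
      simp only [zero_mul, sub_zero, sub_self]
      exact div_nonneg (hs i) hlq.le
    · have hsi : 0 < s i := by
        rcases eq_or_lt_of_le (hs i) with h1 | h1
        · exact absurd (hrs i h1.symm) (by linarith)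
        · exact h1
      have hlog : Real.log (s i / r i) ≤ s i / r i - 1 :=
        Real.log_le_sub_one_of_pos (by positivity)
      rw [Real.log_div (ne_of_gt hsi) (ne_of_gt h0)] at hlog
      have : r i * (Real.log (s i) - Real.log (r i)) ≤ s i - r i := by
        have := mul_le_mul_of_nonneg_left hlog (le_of_lt h0)
        calc r i * (Real.log (s i) - Real.log (r i)) ≤ r i * (s i / r i - 1) := this
          _ = s i - r i := by field_simp
      rw [Real.logb, Real.logb]
      calc r i * (Real.log (s i) / Real.log q) - r i * (Real.log (r i) / Real.log q)
          = r i * (Real.log (s i) - Real.log (r i)) / Real.log q := by ring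
        _ ≤ (s i - r i) / Real.log q := (div_le_div_iff_of_pos_right hlq).mpr this
  have := Finset.sum_le_sum (fun i (_ : i ∈ Finset.univ) => key i)
  rw [Finset.sum_sub_distrib] at this
  have h2 : ∑ i, (s i - r i) / Real.log q = (∑ i, s i - ∑ i, r i) / Real.log q := by
    rw [← Finset.sum_div, Finset.sum_sub_distrib]
  rw [h2] at this
  have h3 : (∑ i, s i - ∑ i, r i) / Real.log q ≤ 0 := by
    apply div_nonpos_of_nonpos_of_nonneg <;> linarith
  linarith

lemma ent_comp_le [Fintype α] [DecidableEq α] [Fintype γ'] [DecidableEq γ']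
    (hq : 1 < q) (hp0 : ∀ ω, 0 ≤ p ω) (Z : Ω → α) (f : α → γ') :
    ent q p (fun ω => f (Z ω)) ≤ ent q p Z := by
  rw [ent_omega, ent_omega, neg_le_neg_iff]
  refine Finset.sum_le_sum fun ω _ => ?_
  rcases eq_or_lt_of_le (hp0 ω) with h0 | h0
  · rw [← h0]; simp
  · refine mul_le_mul_of_nonneg_left ?_ (le_of_lt h0)
    exact Real.logb_le_logb_of_le hq (lt_of_lt_of_le h0 (le_pr hp0 Z ω))
      (pr_comp_le hp0 Z f (Z ω))

lemma ent_comp_eq [Fintype α] [DecidableEq α] [Fintype γ'] [DecidableEq γ']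
    (hq : 1 < q) (hp0 : ∀ ω, 0 ≤ p ω) (Z : Ω → α) (f : α → γ') (g : γ' → α)
    (hg : ∀ x, g (f x) = x) :
    ent q p (fun ω => f (Z ω)) = ent q p Z := by
  refine le_antisymm (ent_comp_le hq hp0 Z f) ?_
  have h := ent_comp_le hq hp0 (fun ω => f (Z ω)) g
  simpa [hg] using h

lemma pr_pair_fst [Fintype γ] [DecidableEq γ] [DecidableEq γ'] (U : Ω → γ) (W : Ω → γ')
    (w : γ') : ∑ u, pr p (fun ω => (U ω, W ω)) (u, w) = pr p W w := by
  unfold pr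
  rw [Finset.sum_comm]
  congr 1; ext ω
  simp [Prod.mk.injEq, ite_and, Finset.sum_ite_eq]

lemma submod {γu γv γw : Type} [Fintype γu] [DecidableEq γu] [Fintype γv] [DecidableEq γv]
    [Fintype γw] [DecidableEq γw] (hq : 1 < q) (hp0 : ∀ ω, 0 ≤ p ω) (hp1 : ∑ ω, p ω = 1)
    (U : Ω → γu) (V : Ω → γv) (W : Ω → γw) :
    ent q p (fun ω => ((U ω, V ω), W ω)) + ent q p W ≤
      ent q p (fun ω => (U ω, W ω)) + ent q p (fun ω => (V ω, W ω)) := by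
  classical
  set Z : Ω → (γu × γv) × γw := fun ω => ((U ω, V ω), W ω) with hZ
  set s : (γu × γv) × γw → ℝ := fun x =>
    pr p (fun ω => (U ω, W ω)) (x.1.1, x.2) * pr p (fun ω => (V ω, W ω)) (x.1.2, x.2)
      / pr p W x.2 with hsdef
  have hrU : ∀ x, pr p Z x ≤ pr p (fun ω => (U ω, W ω)) (x.1.1, x.2) := fun x =>
    pr_comp_le hp0 Z (fun y => (y.1.1, y.2)) x
  have hrV : ∀ x, pr p Z x ≤ pr p (fun ω => (V ω, W ω)) (x.1.2, x.2) := fun x =>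
    pr_comp_le hp0 Z (fun y => (y.1.2, y.2)) x
  have hrW : ∀ x, pr p Z x ≤ pr p W x.2 := fun x =>
    pr_comp_le hp0 Z (fun y => y.2) x
  have hr : ∀ x, 0 ≤ pr p Z x := pr_nonneg hp0 Z
  have hs : ∀ x, 0 ≤ s x := fun x =>
    div_nonneg (mul_nonneg (pr_nonneg hp0 _ _) (pr_nonneg hp0 _ _)) (pr_nonneg hp0 _ _)
  have hrs : ∀ x, s x = 0 → pr p Z x = 0 := by
    intro x hx
    by_contra h
    have hzpos : 0 < pr p Z x := lt_of_le_of_ne (hr x) (Ne.symm h)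
    have h1 := lt_of_lt_of_le hzpos (hrU x)
    have h2 := lt_of_lt_of_le hzpos (hrV x)
    have h3 := lt_of_lt_of_le hzpos (hrW x)
    have hpos : 0 < s x := by rw [hsdef]; exact div_pos (mul_pos h1 h2) h3
    exact absurd hx hpos.ne'
  have hfact : ∀ (a : γu → ℝ) (b : γv → ℝ) (c : ℝ),
      ∑ u, ∑ v, a u * b v / c = (∑ u, a u) * (∑ v, b v) / c := by
    intro a b c
    rw [Finset.sum_mul_sum, Finset.sum_div]
    exact Finset.sum_congr rfl fun u _ => by rw [Finset.sum_div]
  have hs1 : ∑ x, s x ≤ ∑ x, pr p Z x := by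
    rw [sum_pr Z, hp1]
    calc ∑ x : (γu × γv) × γw, s x
        = ∑ uv : γu × γv, ∑ w, s (uv, w) := Fintype.sum_prod_type _
      _ = ∑ w, ∑ uv : γu × γv, s (uv, w) := Finset.sum_comm
      _ = ∑ w, ∑ u, ∑ v, s ((u, v), w) := Finset.sum_congr rfl fun w _ =>
          Fintype.sum_prod_type _
      _ ≤ ∑ w, pr p W w := by
          refine Finset.sum_le_sum fun w _ => ?_
          simp only [hsdef]
          rw [hfact, pr_pair_fst U W w, pr_pair_fst V W w]
          rcases eq_or_lt_of_le (pr_nonneg hp0 W w) with h | h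
          · rw [← h]; simp
          · rw [mul_div_assoc, div_self h.ne', mul_one]
      _ = 1 := by rw [sum_pr W, hp1]
  have hgibbs := gibbs hq (pr p Z) s hr hs hrs hs1
  have hL : ent q p Z = -∑ x, pr p Z x * logb q (pr p Z x) := by rw [ent]
  have hR : -∑ x, pr p Z x * logb q (s x) =
      ent q p (fun ω => (U ω, W ω)) + ent q p (fun ω => (V ω, W ω)) - ent q p W := by
    rw [sum_pr_mul Z (fun x => logb q (s x))]
    rw [ent_omega, ent_omega, ent_omega]
    have key : ∀ ω, p ω * logb q (s (Z ω)) =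
        p ω * logb q (pr p (fun ω' => (U ω', W ω')) (U ω, W ω))
        + p ω * logb q (pr p (fun ω' => (V ω', W ω')) (V ω, W ω))
        - p ω * logb q (pr p W (W ω)) := by
      intro ω
      rcases eq_or_lt_of_le (hp0 ω) with h0 | h0
      · rw [← h0]; ring
      · have h1 : 0 < pr p (fun ω' => (U ω', W ω')) (U ω, W ω) :=
          lt_of_lt_of_le h0 (le_pr hp0 (fun ω' => (U ω', W ω')) ω)
        have h2 : 0 < pr p (fun ω' => (V ω', W ω')) (V ω, W ω) :=
          lt_of_lt_of_le h0 (le_pr hp0 (fun ω' => (V ω', W ω')) ω)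
        have h3 : 0 < pr p W (W ω) := lt_of_lt_of_le h0 (le_pr hp0 W ω)
        have hsz : s (Z ω) = pr p (fun ω' => (U ω', W ω')) (U ω, W ω)
            * pr p (fun ω' => (V ω', W ω')) (V ω, W ω) / pr p W (W ω) := rfl
        rw [hsz, Real.logb_div (by positivity) h3.ne', Real.logb_mul h1.ne' h2.ne']
        ring
    rw [Finset.sum_congr rfl fun ω _ => key ω, Finset.sum_sub_distrib,
      Finset.sum_add_distrib]
    ring
  have : ent q p Z ≤ ent q p (fun ω => (U ω, W ω)) + ent q p (fun ω => (V ω, W ω))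
      - ent q p W := by rw [hL]; rw [← hR]; exact hgibbs
  linarith

lemma ent_const_unit (hp1 : ∑ ω, p ω = 1) : ent q p (fun _ : Ω => ()) = 0 := by
  simp [ent, pr, hp1]

lemma subadd {γu γv : Type} [Fintype γu] [DecidableEq γu] [Fintype γv] [DecidableEq γv]
    (hq : 1 < q) (hp0 : ∀ ω, 0 ≤ p ω) (hp1 : ∑ ω, p ω = 1) (U : Ω → γu) (V : Ω → γv) :
    ent q p (fun ω => (U ω, V ω)) ≤ ent q p U + ent q p V := by
  have h := submod hq hp0 hp1 U V (fun _ => ())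
  have e1 : ent q p (fun ω => (U ω, ())) = ent q p U :=
    ent_comp_eq hq hp0 U (fun u => (u, ())) Prod.fst (fun _ => rfl)
  have e2 : ent q p (fun ω => (V ω, ())) = ent q p V :=
    ent_comp_eq hq hp0 V (fun v => (v, ())) Prod.fst (fun _ => rfl)
  have e3 : ent q p (fun ω => ((U ω, V ω), ())) = ent q p (fun ω => (U ω, V ω)) :=
    ent_comp_eq hq hp0 (fun ω => (U ω, V ω)) (fun y => (y, ())) Prod.fst (fun _ => rfl)
  have e4 := ent_const_unit (p := p) (q := q) hp1
  linarith

lemma indep_ent {γ γ' : Type} [Fintype γ] [DecidableEq γ] [Fintype γ'] [DecidableEq γ']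
    (hp1 : ∑ ω, p ω = 1) (A : Ω → γ) (B : Ω → γ') (hAB : Indep p A B) :
    ent q p (fun ω => (A ω, B ω)) = ent q p A + ent q p B := by
  have key : ∀ x y : ℝ, x * y * logb q (x * y)
      = y * (x * logb q x) + x * (y * logb q y) := by
    intro x y
    rcases eq_or_ne x 0 with h | h
    · simp [h]
    rcases eq_or_ne y 0 with h' | h'
    · simp [h']
    rw [Real.logb_mul h h']; ring
  have hb1 : ∑ b, pr p B b = 1 := by rw [sum_pr]; exact hp1
  have ha1 : ∑ a, pr p A a = 1 := by rw [sum_pr]; exact hp1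
  have main : ∑ x : γ × γ', pr p (fun ω => (A ω, B ω)) x
        * logb q (pr p (fun ω => (A ω, B ω)) x)
      = (∑ a, pr p A a * logb q (pr p A a)) + (∑ b, pr p B b * logb q (pr p B b)) := by
    have hAB2 : ∀ a b, pr p (fun ω => (A ω, B ω)) (a, b) = pr p A a * pr p B b := hAB
    rw [Fintype.sum_prod_type]
    simp only [hAB2, key]
    calc ∑ a, ∑ b, (pr p B b * (pr p A a * logb q (pr p A a))
          + pr p A a * (pr p B b * logb q (pr p B b)))
        = ∑ a, ((∑ b, pr p B b) * (pr p A a * logb q (pr p A a))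
          + pr p A a * ∑ b, pr p B b * logb q (pr p B b)) := by
          refine Finset.sum_congr rfl fun a _ => ?_
          rw [Finset.sum_add_distrib, ← Finset.sum_mul, ← Finset.mul_sum]
      _ = (∑ a, pr p A a * logb q (pr p A a))
          + (∑ a, pr p A a) * ∑ b, pr p B b * logb q (pr p B b) := by
          rw [hb1, Finset.sum_add_distrib, ← Finset.sum_mul]
          simp only [one_mul]
      _ = _ := by rw [ha1, one_mul]
  rw [ent, ent, ent, main]
  ring


end Aux
end GDSP

open GDSP in
/-- If `A, B` are independent with `H(A) = H(B) = F`, `(X, X')` determines `A`,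
`(Y, Y')` determines `A`, and `(X, Y)` determines `B`, then
`H(X) + H(X') + H(Y) + H(Y') ≥ 3F`. -/
theorem stmt4 {Ω : Type} [Fintype Ω] (q : ℝ) (hq : 1 < q) (F : ℝ)
    {α α' β β' δ ε : Type} [Fintype α] [DecidableEq α] [Fintype α'] [DecidableEq α']
    [Fintype β] [DecidableEq β] [Fintype β'] [DecidableEq β']
    [Fintype δ] [DecidableEq δ] [Fintype ε] [DecidableEq ε]
    (p : Ω → ℝ) (hp : IsProb p)
    (X : Ω → α) (X' : Ω → α') (Y : Ω → β) (Y' : Ω → β') (A : Ω → δ) (B : Ω → ε)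
    (hAB : Indep p A B) (hA : ent q p A = F) (hB : ent q p B = F)
    (hdec1 : condEnt q p A (fun ω => (X ω, X' ω)) = 0)
    (hdec2 : condEnt q p A (fun ω => (Y ω, Y' ω)) = 0)
    (hdec3 : condEnt q p B (fun ω => (X ω, Y ω)) = 0) :
    ent q p X + ent q p X' + ent q p Y + ent q p Y' ≥ 3 * F := by
  obtain ⟨hp0, hp1⟩ := hp
  rw [condEnt] at hdec1 hdec2 hdec3
  rw [sub_eq_zero] at hdec1 hdec2 hdec3

  have s1 : ent q p (fun ω => (X ω, X' ω)) ≤ ent q p X + ent q p X' := subadd hq hp0 hp1 X X'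
  have s2 : ent q p (fun ω => (Y ω, Y' ω)) ≤ ent q p Y + ent q p Y' := subadd hq hp0 hp1 Y Y'
  have m1 : ent q p (fun ω => (X ω, A ω)) ≤ ent q p (fun ω => (A ω, (X ω, X' ω))) :=
    ent_comp_le hq hp0 (fun ω => (A ω, (X ω, X' ω))) (fun y => (y.2.1, y.1))
  have m2 : ent q p (fun ω => (Y ω, A ω)) ≤ ent q p (fun ω => (A ω, (Y ω, Y' ω))) :=
    ent_comp_le hq hp0 (fun ω => (A ω, (Y ω, Y' ω))) (fun y => (y.2.1, y.1))
  have sub1 : ent q p (fun ω => ((X ω, Y ω), A ω)) + ent q p A ≤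
      ent q p (fun ω => (X ω, A ω)) + ent q p (fun ω => (Y ω, A ω)) :=
    submod hq hp0 hp1 X Y A
  have sw : ent q p (fun ω => (A ω, (X ω, Y ω))) = ent q p (fun ω => ((X ω, Y ω), A ω)) :=
    ent_comp_eq hq hp0 (fun ω => ((X ω, Y ω), A ω)) Prod.swap Prod.swap (fun _ => rfl)
  have sub2 : ent q p (fun ω => ((B ω, A ω), (X ω, Y ω))) + ent q p (fun ω => (X ω, Y ω)) ≤
      ent q p (fun ω => (B ω, (X ω, Y ω))) + ent q p (fun ω => (A ω, (X ω, Y ω))) :=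
    submod hq hp0 hp1 B A (fun ω => (X ω, Y ω))
  have m3 : ent q p (fun ω => (B ω, A ω)) ≤ ent q p (fun ω => ((B ω, A ω), (X ω, Y ω))) :=
    ent_comp_le hq hp0 (fun ω => ((B ω, A ω), (X ω, Y ω))) Prod.fst
  have ind : ent q p (fun ω => (B ω, A ω)) = ent q p B + ent q p A := by
    have h := indep_ent (q := q) hp1 A B hAB
    have sw2 : ent q p (fun ω => (B ω, A ω)) = ent q p (fun ω => (A ω, B ω)) :=
      ent_comp_eq hq hp0 (fun ω => (A ω, B ω)) Prod.swap Prod.swap (fun _ => rfl)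
    linarith
  linarith
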